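/- Let λ be a partition of N with length ℓ and index set {k_1,…,k_ℓ}, and set s(n) = ∏_{k ∈ K_N^λ} (n − k). Then for all x, y ∈ ℂ and all z ∈ ℂ: z^{N−ℓ} · Wr(H_{k_ℓ},…,H_{k_1}, f_{y,z})(x) = ( ∏_{1≤i<j≤ℓ} (k_i − k_j) ) · Σ_{n ∈ I^λ} ( s(n)/n! ) H_n^{(λ)}(x,y) z^n, where f_{y,z}(x) = e^{xz+yz²}, the Wronskian is taken with respect to x, and the series on the right converges absolutely. -/

import Mathlib

open Finset Matrix MeasureTheory
set_option maxHeartbeats 1000000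

noncomputable section

/-- The bivariate Hermite polynomial
`H n x y = n! * ∑_{0 ≤ 2k ≤ n} x^(n-2k) y^k / (k! (n-2k)!)`. -/
def Herm (n : ℕ) (x y : ℂ) : ℂ :=
  (n.factorial : ℂ) * ∑ k ∈ Finset.range (n / 2 + 1),
    x ^ (n - 2 * k) * y ^ k / ((k.factorial : ℂ) * ((n - 2 * k).factorial : ℂ))

/-- The Wronskian determinant of `r` functions of one complex variable. -/
def Wr (r : ℕ) (g : Fin r → ℂ → ℂ) (x : ℂ) : ℂ :=
  Matrix.det (Matrix.of fun i j : Fin r => iteratedDeriv (i : ℕ) (g j) x)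

/-- `k_i = λ_i - i + ℓ` (0-indexed: `k i = p i + ℓ - (i+1)`). -/
def kIdx (p : ℕ → ℕ) (ℓ i : ℕ) : ℕ := p i + ℓ - (i + 1)

/-- `∏_{1 ≤ i < j ≤ ℓ} (k_i - k_j)`. -/
def prodK (p : ℕ → ℕ) (ℓ : ℕ) : ℂ :=
  ∏ i ∈ Finset.range ℓ, ∏ j ∈ Finset.range ℓ,
    if i < j then ((kIdx p ℓ i : ℂ) - (kIdx p ℓ j : ℂ)) else 1

/-- `τ^λ(x,y) = Wr(H_{k_ℓ},…,H_{k_1})(x,y) / ∏_{i<j}(k_i-k_j)`. -/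
def tauLam (p : ℕ → ℕ) (ℓ : ℕ) (x y : ℂ) : ℂ :=
  Wr ℓ (fun j => fun t => Herm (kIdx p ℓ (ℓ - 1 - (j : ℕ))) t y) x / prodK p ℓ

/-- The exceptional Hermite polynomial
`H_n^{(λ)}(x,y) = Wr(H_{k_ℓ},…,H_{k_1},H_{n-N+ℓ}) / (∏_{i<j}(k_i-k_j) ∏_i (n-N+ℓ-k_i))`. -/
def XHP (p : ℕ → ℕ) (ℓ N n : ℕ) (x y : ℂ) : ℂ :=
  Wr (ℓ + 1)
    (fun j => if (j : ℕ) < ℓ then (fun t => Herm (kIdx p ℓ (ℓ - 1 - (j : ℕ))) t y)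
      else (fun t => Herm (n + ℓ - N) t y)) x
  / (prodK p ℓ *
      ∏ i ∈ Finset.range ℓ, ((n : ℂ) + (ℓ : ℂ) - (N : ℂ) - (kIdx p ℓ i : ℂ)))

/-- The Maya diagram `M^λ = {λ_i - i : i ≥ 1} ⊆ ℤ` (0-indexed: `p i - (i+1)`). -/
def Maya (p : ℕ → ℕ) : Set ℤ := {m | ∃ i : ℕ, m = (p i : ℤ) - ((i : ℤ) + 1)}

/-- `s(n) = ∏_{k ∈ K_N^λ} (n - k)` where `K_N^λ = {λ_i - i + N : 1 ≤ i ≤ N}`. -/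
def sFun (p : ℕ → ℕ) (N n : ℕ) : ℂ :=
  ∏ i ∈ Finset.range N, ((n : ℂ) - ((p i : ℂ) + (N : ℂ) - ((i : ℂ) + 1)))


lemma herm_hasSum (x y z : ℂ) :
    HasSum (fun n => Herm n x y * z ^ n / (n.factorial : ℂ))
      (Complex.exp (x * z + y * z ^ 2)) := by
  classical
  set u : ℕ → ℂ := fun a => (x * z) ^ a / (a.factorial : ℂ) with hu
  set v : ℕ → ℂ := fun b => (y * z ^ 2) ^ b / (b.factorial : ℂ) with hv
  have hnorm : ∀ w : ℂ, (fun a : ℕ => ‖w ^ a / (a.factorial : ℂ)‖)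
      = fun a : ℕ => ‖w‖ ^ a / (a.factorial : ℝ) := by
    intro w; funext a
    rw [norm_div, norm_pow, Complex.norm_natCast]
  have hus : Summable fun a => ‖u a‖ := by
    rw [hu]; simp only []
    rw [hnorm (x * z)]; exact Real.summable_pow_div_factorial ‖x * z‖
  have hvs : Summable fun b => ‖v b‖ := by
    rw [hv]; simp only []
    rw [hnorm (y * z ^ 2)]; exact Real.summable_pow_div_factorial ‖y * z ^ 2‖
  have hprod : Summable fun q : ℕ × ℕ => u q.1 * v q.2 :=
    summable_mul_of_summable_norm hus hvs
  have huS : HasSum u (Complex.exp (x * z)) := by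
    have := (NormedSpace.expSeries_div_summable (x * z)).hasSum
    rwa [show (∑' n : ℕ, (x*z) ^ n / (n.factorial : ℂ)) = Complex.exp (x*z) by
      rw [Complex.exp_eq_exp_ℂ, NormedSpace.exp_eq_tsum_div]] at this
  have hvS : HasSum v (Complex.exp (y * z ^ 2)) := by
    have := (NormedSpace.expSeries_div_summable (y * z ^ 2)).hasSum
    rwa [show (∑' n : ℕ, (y*z^2) ^ n / (n.factorial : ℂ)) = Complex.exp (y*z^2) by
      rw [Complex.exp_eq_exp_ℂ, NormedSpace.exp_eq_tsum_div]] at this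
  have hUV : HasSum (fun q : ℕ × ℕ => u q.1 * v q.2)
      (Complex.exp (x * z + y * z ^ 2)) := by
    rw [Complex.exp_add]; exact huS.mul hvS hprod
  -- transfer along the injection (a,b) ↦ (a+2b, b)
  set g : ℕ × ℕ → ℂ := fun q =>
    if 2 * q.2 ≤ q.1 then x ^ (q.1 - 2 * q.2) * y ^ q.2 * z ^ q.1 /
      ((q.2.factorial : ℂ) * ((q.1 - 2 * q.2).factorial : ℂ)) else 0 with hg
  set F : ℕ × ℕ → ℕ × ℕ := fun q => (q.1 + 2 * q.2, q.2) with hF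
  have hFinj : Function.Injective F := by
    rintro ⟨a, b⟩ ⟨c, d⟩ h
    simp only [hF, Prod.mk.injEq] at h
    obtain ⟨h1, h2⟩ := h; subst h2
    simp only [Prod.mk.injEq, and_true]; omega
  have hg0 : ∀ q ∉ Set.range F, g q = 0 := by
    rintro ⟨n, k⟩ hq
    by_cases h : 2 * k ≤ n
    · exact absurd ⟨(n - 2 * k, k), by simp [hF]; omega⟩ hq
    · simp [hg, h]
  have hcomp : (g ∘ F) = fun q : ℕ × ℕ => u q.1 * v q.2 := by
    funext ⟨a, b⟩
    simp only [hg, hF, Function.comp_apply, hu, hv]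
    rw [if_pos (by omega)]
    have : a + 2 * b - 2 * b = a := by omega
    rw [this, mul_pow, mul_pow, ← pow_mul, pow_add]
    field_simp
  have hgS : HasSum g (Complex.exp (x * z + y * z ^ 2)) := by
    rw [← hFinj.hasSum_iff hg0, hcomp]; exact hUV
  refine hgS.prod_fiberwise fun n => ?_
  have hfin : HasSum (fun k => g (n, k))
      (∑ k ∈ Finset.range (n / 2 + 1), g (n, k)) := by
    refine hasSum_sum_of_ne_finset_zero fun k hk => ?_
    have : ¬ 2 * k ≤ n := by
      simp only [Finset.mem_range] at hk; omega
    simp [hg, this]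
  convert hfin using 1
  rw [Herm, Finset.mul_sum, Finset.sum_mul, Finset.sum_div]
  refine Finset.sum_congr rfl fun k hk => ?_
  have h2k : 2 * k ≤ n := by
    simp only [Finset.mem_range] at hk; omega
  simp only [hg, if_pos h2k]
  have hnf : (n.factorial : ℂ) ≠ 0 := Nat.cast_ne_zero.mpr n.factorial_ne_zero
  rw [mul_assoc, mul_div_cancel_left₀ _ hnf, div_mul_eq_mul_div]

lemma herm_hasDerivAt (m : ℕ) (y t : ℂ) :
    HasDerivAt (fun s => Herm m s y) ((m : ℂ) * Herm (m - 1) t y) t := by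
  have key : HasDerivAt (fun s => Herm m s y)
      ((m.factorial : ℂ) * ∑ k ∈ Finset.range (m / 2 + 1),
        ((m - 2 * k : ℕ) : ℂ) * t ^ (m - 2 * k - 1) * y ^ k /
          ((k.factorial : ℂ) * ((m - 2 * k).factorial : ℂ))) t := by
    unfold Herm
    refine HasDerivAt.const_mul _ ?_
    rw [show (∑ k ∈ Finset.range (m / 2 + 1),
        ((m - 2 * k : ℕ) : ℂ) * t ^ (m - 2 * k - 1) * y ^ k /
          ((k.factorial : ℂ) * ((m - 2 * k).factorial : ℂ)))
      = ∑ k ∈ Finset.range (m / 2 + 1),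
        (((m - 2 * k : ℕ) : ℂ) * t ^ (m - 2 * k - 1)) * (y ^ k /
          ((k.factorial : ℂ) * ((m - 2 * k).factorial : ℂ))) from
      Finset.sum_congr rfl fun k _ => by ring]
    refine HasDerivAt.fun_sum fun k _ => ?_
    have h1 : HasDerivAt (fun s : ℂ => s ^ (m - 2 * k))
        (((m - 2 * k : ℕ) : ℂ) * t ^ (m - 2 * k - 1)) t := hasDerivAt_pow _ t
    have := h1.mul_const (y ^ k / ((k.factorial : ℂ) * ((m - 2 * k).factorial : ℂ)))
    refine this.congr_deriv rfl |>.congr_of_eventuallyEq ?_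
    filter_upwards with s
    ring
  convert key using 1
  rcases Nat.eq_zero_or_pos m with hm | hm
  · subst hm; simp
  -- m ≥ 1
  unfold Herm
  have hsub : Finset.range ((m - 1) / 2 + 1) ⊆ Finset.range (m / 2 + 1) := by
    apply Finset.range_subset_range.mpr; omega
  rw [← Finset.sum_subset hsub (fun k _ hk => ?_)]
  · rw [Finset.mul_sum, Finset.mul_sum, Finset.mul_sum]
    refine Finset.sum_congr rfl fun k hk => ?_
    have h2k : 2 * k ≤ m - 1 := by
      simp only [Finset.mem_range] at hk; omega
    have he : m - 1 - 2 * k = m - 2 * k - 1 := by omega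
    have hfac : ((m - 2 * k).factorial : ℂ) =
        ((m - 2 * k : ℕ) : ℂ) * ((m - 2 * k - 1).factorial : ℂ) := by
      rw [show m - 2 * k = (m - 2 * k - 1) + 1 by omega, Nat.factorial_succ]
      push_cast; ring
    have hmfac : (m.factorial : ℂ) = (m : ℂ) * ((m - 1).factorial : ℂ) := by
      rw [show m = (m - 1) + 1 by omega, Nat.factorial_succ]
      push_cast; ring
    rw [he, hfac, hmfac]
    have hk0 : ((k.factorial : ℂ)) ≠ 0 := Nat.cast_ne_zero.mpr k.factorial_ne_zero
    have hk1 : (((m - 2 * k - 1).factorial : ℂ)) ≠ 0 :=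
      Nat.cast_ne_zero.mpr (m - 2 * k - 1).factorial_ne_zero
    have hk2 : ((m - 2 * k : ℕ) : ℂ) ≠ 0 := by
      have : m - 2 * k ≠ 0 := by omega
      exact Nat.cast_ne_zero.mpr this
    field_simp
  · -- extra terms vanish
    simp only [Finset.mem_range] at *
    have : m - 2 * k = 0 := by omega
    rw [this]
    simp

lemma herm_iteratedDeriv (i : ℕ) : ∀ (m : ℕ) (y : ℂ),
    iteratedDeriv i (fun t => Herm m t y)
      = fun t => (m.descFactorial i : ℂ) * Herm (m - i) t y := by
  induction i with
  | zero => intro m y; simp [iteratedDeriv_zero]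
  | succ i ih =>
    intro m y
    rw [iteratedDeriv_succ, ih]
    funext t
    have h : HasDerivAt (fun s => (m.descFactorial i : ℂ) * Herm (m - i) s y)
        ((m.descFactorial i : ℂ) * (((m - i : ℕ) : ℂ) * Herm (m - i - 1) t y)) t :=
      (herm_hasDerivAt (m - i) y t).const_mul _
    rw [h.deriv, Nat.descFactorial_succ]
    push_cast
    rw [show m - i - 1 = m - (i + 1) by omega]
    ring

lemma exp_iteratedDeriv (i : ℕ) (z c : ℂ) :
    iteratedDeriv i (fun t => Complex.exp (t * z + c))
      = fun t => z ^ i * Complex.exp (t * z + c) := by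
  induction i with
  | zero => funext t; simp
  | succ i ih =>
    rw [iteratedDeriv_succ, ih]
    funext t
    have h1 : HasDerivAt (fun s : ℂ => s * z + c) z t := by
      simpa using ((hasDerivAt_id t).mul_const z).add_const c
    have h : HasDerivAt (fun s : ℂ => z ^ i * Complex.exp (s * z + c))
        (z ^ i * (Complex.exp (t * z + c) * z)) t := (h1.cexp).const_mul _
    rw [h.deriv, pow_succ]; ring

/-- The cofactor minor (independent of the last column). -/
def Minor (p : ℕ → ℕ) (ℓ : ℕ) (y x : ℂ) (i : Fin (ℓ + 1)) : ℂ :=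
  Matrix.det (Matrix.of fun r c : Fin ℓ =>
    iteratedDeriv ((i.succAbove r : Fin (ℓ + 1)) : ℕ)
      (fun t => Herm (kIdx p ℓ (ℓ - 1 - (c : ℕ))) t y) x)

lemma Wr_expand (p : ℕ → ℕ) (ℓ : ℕ) (y x : ℂ) (f : ℂ → ℂ) :
    Wr (ℓ + 1) (fun j => if (j : ℕ) < ℓ then
        (fun t => Herm (kIdx p ℓ (ℓ - 1 - (j : ℕ))) t y) else f) x
      = ∑ i : Fin (ℓ + 1), (-1) ^ ((i : ℕ) + ℓ) * iteratedDeriv (i : ℕ) f x *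
          Minor p ℓ y x i := by
  unfold Wr
  rw [Matrix.det_succ_column _ (Fin.last ℓ)]
  refine Finset.sum_congr rfl fun i _ => ?_
  have h1 : (Matrix.of fun i j : Fin (ℓ+1) => iteratedDeriv (i : ℕ)
      ((fun j : Fin (ℓ+1) => if (j : ℕ) < ℓ then
        (fun t => Herm (kIdx p ℓ (ℓ - 1 - (j : ℕ))) t y) else f) j) x) i (Fin.last ℓ)
      = iteratedDeriv (i : ℕ) f x := by
    simp only [Matrix.of_apply, Fin.val_last]
    rw [if_neg (lt_irrefl ℓ)]
  have h2 : Matrix.det ((Matrix.of fun i j : Fin (ℓ+1) => iteratedDeriv (i : ℕ)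
      ((fun j : Fin (ℓ+1) => if (j : ℕ) < ℓ then
        (fun t => Herm (kIdx p ℓ (ℓ - 1 - (j : ℕ))) t y) else f) j) x).submatrix
        i.succAbove (Fin.last ℓ).succAbove) = Minor p ℓ y x i := by
    unfold Minor
    congr 1
    funext r c
    simp only [Matrix.submatrix_apply, Matrix.of_apply, Fin.succAbove_last,
      Fin.coe_castSucc]
    rw [if_pos c.isLt]
  rw [h1, h2, Fin.val_last]


lemma fac_prod (m d : ℕ) :
    m.factorial * ∏ j ∈ Finset.range d, (m + j + 1) = (m + d).factorial := by
  induction d with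
  | zero => simp
  | succ d ih =>
    rw [Finset.prod_range_succ, ← mul_assoc, ih,
      show m + (d + 1) = (m + d) + 1 by omega, Nat.factorial_succ]
    ring

lemma herm_shift_hasSum (i : ℕ) (x y z : ℂ) :
    HasSum (fun m : ℕ => (m.descFactorial i : ℂ) * Herm (m - i) x y * z ^ m /
        (m.factorial : ℂ))
      (z ^ i * Complex.exp (x * z + y * z ^ 2)) := by
  have h := (herm_hasSum x y z).mul_left (z ^ i)
  have hinj : Function.Injective (fun n : ℕ => n + i) := fun a b hab =>
    Nat.add_right_cancel hab
  refine (hinj.hasSum_iff ?_).mp (h.congr_fun fun n => ?_)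
  · intro m hm
    have hmi : m < i := by
      rcases Nat.lt_or_ge m i with h' | h'
      · exact h'
      · exact absurd ⟨m - i, show m - i + i = m by omega⟩ hm
    rw [Nat.descFactorial_eq_zero_iff_lt.mpr hmi]
    simp
  · have hfd : ((n + i).factorial : ℂ)
        = ((n + i).descFactorial i : ℂ) * (n.factorial : ℂ) := by
      have := Nat.factorial_mul_descFactorial (show i ≤ n + i by omega)
      rw [show n + i - i = n by omega] at this
      exact_mod_cast (by rw [← this]; ring)
    have hd0 : ((n + i).descFactorial i : ℂ) ≠ 0 :=
      Nat.cast_ne_zero.mpr (by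
        rw [Ne, Nat.descFactorial_eq_zero_iff_lt]; omega)
    have hn0 : ((n.factorial : ℂ)) ≠ 0 := Nat.cast_ne_zero.mpr n.factorial_ne_zero
    simp only [Function.comp_apply]
    rw [show n + i - i = n by omega, hfd, pow_add]
    field_simp

lemma Wr_dup (p : ℕ → ℕ) (ℓ : ℕ) (y x : ℂ) (i : ℕ) (hi : i < ℓ) :
    Wr (ℓ + 1) (fun j => if (j : ℕ) < ℓ then
        (fun t => Herm (kIdx p ℓ (ℓ - 1 - (j : ℕ))) t y)
      else (fun t => Herm (kIdx p ℓ i) t y)) x = 0 := by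
  unfold Wr
  refine Matrix.det_zero_of_column_eq
    (i := (⟨ℓ - 1 - i, by omega⟩ : Fin (ℓ + 1))) (j := Fin.last ℓ) ?_ ?_
  · intro h
    have := congrArg Fin.val h
    simp only [Fin.val_last] at this
    omega
  · intro r
    simp only [Matrix.of_apply, Fin.val_last]
    rw [if_pos (show ℓ - 1 - i < ℓ by omega), if_neg (lt_irrefl ℓ),
      show ℓ - 1 - (ℓ - 1 - i) = i by omega]

lemma T_hasSum (p : ℕ → ℕ) (ℓ : ℕ) (x y z : ℂ) :
    HasSum (fun m : ℕ => Wr (ℓ + 1) (fun j => if (j : ℕ) < ℓ then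
          (fun t => Herm (kIdx p ℓ (ℓ - 1 - (j : ℕ))) t y)
        else (fun t => Herm m t y)) x * z ^ m / (m.factorial : ℂ))
      (Wr (ℓ + 1) (fun j => if (j : ℕ) < ℓ then
          (fun t => Herm (kIdx p ℓ (ℓ - 1 - (j : ℕ))) t y)
        else (fun t => Complex.exp (t * z + y * z ^ 2))) x) := by
  have hterm : ∀ i : Fin (ℓ + 1), HasSum
      (fun m : ℕ => ((-1 : ℂ) ^ ((i : ℕ) + ℓ) * Minor p ℓ y x i) *
        ((m.descFactorial (i : ℕ) : ℂ) * Herm (m - (i : ℕ)) x y * z ^ m /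
          (m.factorial : ℂ)))
      (((-1 : ℂ) ^ ((i : ℕ) + ℓ) * Minor p ℓ y x i) *
        (z ^ (i : ℕ) * Complex.exp (x * z + y * z ^ 2))) :=
    fun i => (herm_shift_hasSum (i : ℕ) x y z).mul_left _
  have H := hasSum_sum (s := Finset.univ) (fun i _ => hterm i)
  rw [Wr_expand]
  have hval : (∑ i : Fin (ℓ + 1), ((-1 : ℂ) ^ ((i : ℕ) + ℓ) * Minor p ℓ y x i) *
        (z ^ (i : ℕ) * Complex.exp (x * z + y * z ^ 2)))
      = ∑ i : Fin (ℓ + 1), (-1 : ℂ) ^ ((i : ℕ) + ℓ) *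
          iteratedDeriv (i : ℕ) (fun t => Complex.exp (t * z + y * z ^ 2)) x *
          Minor p ℓ y x i := by
    refine Finset.sum_congr rfl fun i _ => ?_
    rw [exp_iteratedDeriv (i : ℕ) z (y * z ^ 2)]
    ring
  rw [← hval]
  refine H.congr_fun fun m => ?_
  rw [Wr_expand p ℓ y x (fun t => Herm m t y), Finset.sum_mul, Finset.sum_div]
  refine Finset.sum_congr rfl fun i _ => ?_
  rw [herm_iteratedDeriv (i : ℕ) m y]
  ring

/-- For a partition `λ` of `N` of length `ℓ`, all `x, y, z ∈ ℂ`: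
`z^{N-ℓ} Wr(H_{k_ℓ},…,H_{k_1}, e^{xz+yz²})(x)
  = (∏_{i<j}(k_i-k_j)) Σ_{n ∈ I^λ} (s(n)/n!) H_n^{(λ)}(x,y) zⁿ`,
with the series converging absolutely. -/
theorem XHP_generating_series
    (p : ℕ → ℕ) (ℓ N : ℕ)
    (hanti : Antitone p)
    (hsum : ∑ i ∈ Finset.range (N + 1), p i = N)
    (hlen : ∀ i, p i ≠ 0 ↔ i < ℓ)
    (x y z : ℂ) :
    Summable ({k : ℕ | ((k : ℤ) - (N : ℤ)) ∉ Maya p}.indicator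
        fun k => sFun p N k * XHP p ℓ N k x y * z ^ k / (k.factorial : ℂ)) ∧
    z ^ (N - ℓ) *
        Wr (ℓ + 1)
          (fun j => if (j : ℕ) < ℓ then (fun t => Herm (kIdx p ℓ (ℓ - 1 - (j : ℕ))) t y)
            else (fun t => Complex.exp (t * z + y * z ^ 2))) x
      = prodK p ℓ *
          ∑' k : ℕ, {k : ℕ | ((k : ℤ) - (N : ℤ)) ∉ Maya p}.indicator
            (fun k => sFun p N k * XHP p ℓ N k x y * z ^ k / (k.factorial : ℂ)) k := by
  classical
  have hℓN : ℓ ≤ N := by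
    by_contra hcon
    push_neg at hcon
    have h1 : ∀ i ∈ Finset.range (N + 1), 1 ≤ p i := fun i hi => by
      have : i < ℓ := by simp only [Finset.mem_range] at hi; omega
      exact Nat.one_le_iff_ne_zero.mpr ((hlen i).mpr this)
    have h2 := Finset.sum_le_sum h1
    simp only [Finset.sum_const, Finset.card_range, smul_eq_mul, mul_one] at h2
    omega
  have hp0 : ∀ i, ℓ ≤ i → p i = 0 := fun i hi => by
    by_contra hne; have := (hlen i).mp hne; omega
  have hpge : ∀ i, i < ℓ → 1 ≤ p i := fun i hi =>
    Nat.one_le_iff_ne_zero.mpr ((hlen i).mpr hi)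
  have hkZ : ∀ i, i < ℓ → (kIdx p ℓ i : ℤ) = (p i : ℤ) + ℓ - (i + 1) := by
    intro i hi; have := hpge i hi; unfold kIdx; omega
  have hkC : ∀ i, i < ℓ → (kIdx p ℓ i : ℂ) = (p i : ℂ) + (ℓ : ℂ) - ((i : ℂ) + 1) := by
    intro i hi
    have h2 := congrArg (fun t : ℤ => (t : ℂ)) (hkZ i hi)
    push_cast at h2
    linear_combination h2
  have hkmono : ∀ i j, i < j → j < ℓ → kIdx p ℓ j < kIdx p ℓ i := by
    intro i j hij hj
    have h1 := hpge j hj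
    have h2 : p j ≤ p i := hanti (le_of_lt hij)
    have h3 : j < ℓ := hj
    unfold kIdx; omega
  have hprodK : prodK p ℓ ≠ 0 := by
    unfold prodK
    rw [Finset.prod_ne_zero_iff]
    intro i hi
    rw [Finset.prod_ne_zero_iff]
    intro j hj
    split_ifs with hlt
    · rw [sub_ne_zero]
      have hne : kIdx p ℓ i ≠ kIdx p ℓ j :=
        Nat.ne_of_gt (hkmono i j hlt (Finset.mem_range.mp hj))
      exact fun hEq => hne (Nat.cast_injective hEq)
    · exact one_ne_zero
  set Wex : ℂ := Wr (ℓ + 1)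
      (fun j => if (j : ℕ) < ℓ then (fun t => Herm (kIdx p ℓ (ℓ - 1 - (j : ℕ))) t y)
        else (fun t => Complex.exp (t * z + y * z ^ 2))) x with hWex
  set T : ℕ → ℂ := fun m => Wr (ℓ + 1) (fun j => if (j : ℕ) < ℓ then
      (fun t => Herm (kIdx p ℓ (ℓ - 1 - (j : ℕ))) t y)
    else (fun t => Herm m t y)) x with hTdef
  set V : ℕ → ℂ := fun k => if N - ℓ ≤ k then
      T (k - (N - ℓ)) * z ^ k / (((k - (N - ℓ)).factorial : ℂ)) else 0 with hVdef
  have hVsum : HasSum V (z ^ (N - ℓ) * Wex) := by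
    rw [hWex]
    have h := (T_hasSum p ℓ x y z).mul_left (z ^ (N - ℓ))
    have hinj : Function.Injective (fun m : ℕ => m + (N - ℓ)) := fun a b hab =>
      Nat.add_right_cancel hab
    refine (hinj.hasSum_iff ?_).mp (h.congr_fun fun m => ?_)
    · intro k hk
      have hklt : k < N - ℓ := by
        rcases Nat.lt_or_ge k (N - ℓ) with h' | h'
        · exact h'
        · exact absurd ⟨k - (N - ℓ), show k - (N - ℓ) + (N - ℓ) = k by omega⟩ hk
      simp only [hVdef]
      rw [if_neg (by omega)]
    · simp only [hVdef, hTdef, Function.comp_apply]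
      rw [if_pos (show N - ℓ ≤ m + (N - ℓ) by omega),
        show m + (N - ℓ) - (N - ℓ) = m by omega, pow_add]
      ring
  have hpt : ∀ k, ({k : ℕ | ((k : ℤ) - (N : ℤ)) ∉ Maya p}.indicator
      (fun k => sFun p N k * XHP p ℓ N k x y * z ^ k / (k.factorial : ℂ))) k
      = (prodK p ℓ)⁻¹ * V k := by
    intro k
    by_cases hk : ((k : ℤ) - (N : ℤ)) ∉ Maya p
    · rw [Set.indicator_of_mem
        (show k ∈ {k : ℕ | ((k : ℤ) - (N : ℤ)) ∉ Maya p} from hk)]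
      have hk1 : N - ℓ ≤ k := by
        by_contra hcon
        push_neg at hcon
        exact hk ⟨N - 1 - k, by rw [hp0 (N - 1 - k) (by omega)]; push_cast; omega⟩
      have hkm : k = (k - (N - ℓ)) + (N - ℓ) := by omega
      set m := k - (N - ℓ) with hm
      have hPne : ∀ i ∈ Finset.range ℓ,
          ((k : ℂ) + (ℓ : ℂ) - (N : ℂ) - (kIdx p ℓ i : ℂ)) ≠ 0 := by
        intro i hi h0
        have hi' : i < ℓ := Finset.mem_range.mp hi
        apply hk
        refine ⟨i, ?_⟩
        have hzero : (((k : ℤ) + ℓ - N - (kIdx p ℓ i : ℤ) : ℤ) : ℂ) = 0 := by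
          push_cast
          linear_combination h0
        have hzero' : (k : ℤ) + ℓ - N - (kIdx p ℓ i : ℤ) = 0 := by exact_mod_cast hzero
        have := hkZ i hi'
        omega
      have hPne' : (∏ i ∈ Finset.range ℓ,
          ((k : ℂ) + (ℓ : ℂ) - (N : ℂ) - (kIdx p ℓ i : ℂ))) ≠ 0 :=
        Finset.prod_ne_zero_iff.mpr hPne
      have hXHP : XHP p ℓ N k x y = T m /
          (prodK p ℓ * ∏ i ∈ Finset.range ℓ,
            ((k : ℂ) + (ℓ : ℂ) - (N : ℂ) - (kIdx p ℓ i : ℂ))) := by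
        simp only [hTdef]
        unfold XHP
        rw [show k + ℓ - N = m by omega]
      have hm0 : ((m.factorial : ℂ)) ≠ 0 := Nat.cast_ne_zero.mpr m.factorial_ne_zero
      have hk0 : ((k.factorial : ℂ)) ≠ 0 := Nat.cast_ne_zero.mpr k.factorial_ne_zero
      have hsF : sFun p N k * (m.factorial : ℂ)
          = (∏ i ∈ Finset.range ℓ, ((k : ℂ) + (ℓ : ℂ) - (N : ℂ) - (kIdx p ℓ i : ℂ)))
            * (k.factorial : ℂ) := by
        unfold sFun
        rw [← Finset.prod_range_mul_prod_Ico _ hℓN]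
        have hA : (∏ i ∈ Finset.range ℓ,
              ((k : ℂ) - ((p i : ℂ) + (N : ℂ) - ((i : ℂ) + 1))))
            = ∏ i ∈ Finset.range ℓ,
              ((k : ℂ) + (ℓ : ℂ) - (N : ℂ) - (kIdx p ℓ i : ℂ)) := by
          refine Finset.prod_congr rfl fun i hi => ?_
          rw [hkC i (Finset.mem_range.mp hi)]
          ring
        have hB : (∏ i ∈ Finset.Ico ℓ N,
              ((k : ℂ) - ((p i : ℂ) + (N : ℂ) - ((i : ℂ) + 1))))
            * (m.factorial : ℂ) = (k.factorial : ℂ) := by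
          rw [Finset.prod_Ico_eq_prod_range]
          have hC : (∏ j ∈ Finset.range (N - ℓ),
                ((k : ℂ) - ((p (ℓ + j) : ℂ) + (N : ℂ) - (((ℓ + j : ℕ) : ℂ) + 1))))
              = ∏ j ∈ Finset.range (N - ℓ), (((m + j + 1 : ℕ) : ℂ)) := by
            refine Finset.prod_congr rfl fun j hj => ?_
            rw [hp0 (ℓ + j) (by omega)]
            have hkc : (k : ℂ) = (m : ℂ) + (N : ℂ) - (ℓ : ℂ) := by
              have hz : (k : ℤ) = (m : ℤ) + N - ℓ := by omega
              have h2 := congrArg (fun t : ℤ => (t : ℂ)) hz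
              push_cast at h2
              linear_combination h2
            push_cast
            rw [hkc]
            ring
          rw [hC, ← Nat.cast_prod, ← Nat.cast_mul, mul_comm, fac_prod m (N - ℓ),
            ← hkm]
        rw [hA, mul_assoc, hB]
      have hsF' : sFun p N k
          = (∏ i ∈ Finset.range ℓ, ((k : ℂ) + (ℓ : ℂ) - (N : ℂ) - (kIdx p ℓ i : ℂ)))
            * (k.factorial : ℂ) / (m.factorial : ℂ) := by
        rw [eq_div_iff hm0]; exact hsF
      simp only [hVdef]
      rw [if_pos hk1, ← hm, hXHP, hsF']
      field_simp
    · rw [Set.indicator_of_notMem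
        (show k ∉ {k : ℕ | ((k : ℤ) - (N : ℤ)) ∉ Maya p} from hk)]
      have hmem : ((k : ℤ) - (N : ℤ)) ∈ Maya p := not_not.mp hk
      by_cases hk1 : N - ℓ ≤ k
      · obtain ⟨i, hi⟩ := hmem
        have hiℓ : i < ℓ := by
          by_contra hcon
          push_neg at hcon
          have := hp0 i hcon
          omega
        have hmi : k - (N - ℓ) = kIdx p ℓ i := by
          have := hkZ i hiℓ
          omega
        have hT0 : T (kIdx p ℓ i) = 0 := Wr_dup p ℓ y x i hiℓ
        simp only [hVdef]
        rw [if_pos hk1, hmi, hT0]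
        simp
      · simp only [hVdef]
        rw [if_neg hk1]
        simp
  refine ⟨((hVsum.summable).mul_left (prodK p ℓ)⁻¹).congr fun k => (hpt k).symm, ?_⟩
  have ht : (∑' k : ℕ, ({k : ℕ | ((k : ℤ) - (N : ℤ)) ∉ Maya p}.indicator
        (fun k => sFun p N k * XHP p ℓ N k x y * z ^ k / (k.factorial : ℂ))) k)
      = (prodK p ℓ)⁻¹ * (z ^ (N - ℓ) * Wex) := by
    rw [tsum_congr hpt]
    exact (hVsum.mul_left (prodK p ℓ)⁻¹).tsum_eq
  rw [ht, ← mul_assoc, mul_inv_cancel₀ hprodK, one_mul]
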